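/- Let P be a double histogram, let s be a vertex of P, and let k ≥ 0. Then bd^k(s) and td^k(s) are co-visible. -/

import Mathlib

open Classical Set

noncomputable section

/-- A *double histogram*: an `x`-monotone orthogonal polygon in general position whose
base line lies on the `x`-axis.  It is described by its bottom columns (over the
breakpoints `xs` with depths `d < 0`) and its top columns (over the breakpoints `ys`
with heights `h > 0`).  A *simple histogram* is the special case `n = 1`, where the
upper boundary is the single (base) edge at height `h 0`. -/
structure DoubleHistogram where
  m : ℕ
  n : ℕ
  hm : 0 < m
  hn : 0 < n
  xs : Fin (m + 1) → ℝ
  ys : Fin (n + 1) → ℝ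
  d : Fin m → ℝ
  h : Fin n → ℝ
  xs_mono : StrictMono xs
  ys_mono : StrictMono ys
  left_eq : ys 0 = xs 0
  right_eq : ys (Fin.last n) = xs (Fin.last m)
  d_neg : ∀ i, d i < 0
  h_pos : ∀ j, 0 < h j
  /-- general position: no three vertices on a horizontal line -/
  d_inj : Function.Injective d
  h_inj : Function.Injective h
  /-- general position: no three vertices on a vertical line -/
  gen_pos : ∀ (i : Fin (m + 1)) (j : Fin (n + 1)), xs i = ys j →
      (i = 0 ∧ j = 0) ∨ (i = Fin.last m ∧ j = Fin.last n)

/-- Among the reals in `A`, the one of minimum absolute value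
(i.e. "closest to the base line"). -/
def closestToBase (A : Set ℝ) : ℝ :=
  sSup {y | y ∈ A ∧ ∀ y' ∈ A, |y| ≤ |y'|}

/-- The leftmost point of `S` among those minimizing the distance `|y|` to the base line. -/
def leftmostLowest (S : Set (ℝ × ℝ)) : ℝ × ℝ :=
  (sInf {x | ∃ y, (x, y) ∈ S ∧ ∀ q ∈ S, |y| ≤ |q.2|},
    closestToBase {y | (sInf {x | ∃ y', (x, y') ∈ S ∧ ∀ q ∈ S, |y'| ≤ |q.2|}, y) ∈ S})

namespace DoubleHistogram

variable (H : DoubleHistogram)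

/-- The polygon `P`, as a closed region of the plane. -/
def region : Set (ℝ × ℝ) :=
  (⋃ i : Fin H.m, Icc (H.xs i.castSucc) (H.xs i.succ) ×ˢ Icc (H.d i) 0) ∪
    ⋃ j : Fin H.n, Icc (H.ys j.castSucc) (H.ys j.succ) ×ˢ Icc 0 (H.h j)

/-- The vertex set `V(P)`. -/
def verts : Set (ℝ × ℝ) :=
  (⋃ i : Fin H.m,
      ({(H.xs i.castSucc, H.d i), (H.xs i.succ, H.d i)} : Set (ℝ × ℝ))) ∪
    ⋃ j : Fin H.n,
      ({(H.ys j.castSucc, H.h j), (H.ys j.succ, H.h j)} : Set (ℝ × ℝ))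

/-- `p` and `q` are co-visible: the axis-parallel rectangle they span lies in `P`. -/
def covisible (p q : ℝ × ℝ) : Prop :=
  Icc (min p.1 q.1) (max p.1 q.1) ×ˢ Icc (min p.2 q.2) (max p.2 q.2) ⊆ H.region

lemma covisible_symm {p q : ℝ × ℝ} (hpq : H.covisible p q) : H.covisible q p := by
  unfold covisible at hpq ⊢
  rwa [min_comm q.1 p.1, max_comm q.1 p.1, min_comm q.2 p.2, max_comm q.2 p.2]

/-- The (unweighted) visibility graph `G(P)` on the vertices of `P`. -/
def visGraph : SimpleGraph ↥H.verts where
  Adj u v := u ≠ v ∧ H.covisible ↑u ↑v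
  symm := ⟨fun _ _ hu => ⟨hu.1.symm, H.covisible_symm hu.2⟩⟩
  loopless := ⟨fun _ hu => hu.1 rfl⟩

/-- The closed neighborhood `N(v)`: `v` together with the vertices it sees. -/
def Nbr (v : ℝ × ℝ) : Set (ℝ × ℝ) :=
  {w | w ∈ H.verts ∧ (w = v ∨ H.covisible v w)}

/-- The abscissa where the leftward horizontal ray from `v` hits the boundary of `P`. -/
def lhit (v : ℝ × ℝ) : ℝ :=
  sInf {x | x ≤ v.1 ∧ Icc x v.1 ×ˢ ({v.2} : Set ℝ) ⊆ H.region}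

/-- The abscissa where the rightward horizontal ray from `v` hits the boundary of `P`. -/
def rhit (v : ℝ × ℝ) : ℝ :=
  sSup {x | v.1 ≤ x ∧ Icc v.1 x ×ˢ ({v.2} : Set ℝ) ⊆ H.region}

/-- The `y`-coordinate, among the vertices of `P` with abscissa `x` lying on the same side
of the base line as `side`, of the one closest to the base line (i.e. the endpoint of the
vertical edge at `x` closer to the base line). -/
def nearY (x : ℝ) (side : ℝ) : ℝ :=
  if side < 0 then sSup {y | y < 0 ∧ (x, y) ∈ H.verts}
  else sInf {y | 0 < y ∧ (x, y) ∈ H.verts}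

/-- The left point `ℓ(v)` (double-histogram version): if the leftward ray from `v` hits the
left boundary then the hit point, otherwise the endpoint of the hit vertical edge closer to
the base line. -/
def lpt (v : ℝ × ℝ) : ℝ × ℝ :=
  if H.lhit v = H.xs 0 then (H.xs 0, v.2) else (H.lhit v, H.nearY (H.lhit v) v.2)

/-- The right point `r(v)` (double-histogram version). -/
def rpt (v : ℝ × ℝ) : ℝ × ℝ :=
  if H.rhit v = H.xs (Fin.last H.m) then (H.xs (Fin.last H.m), v.2)
  else (H.rhit v, H.nearY (H.rhit v) v.2)

/-- The left base vertex (for a simple histogram, i.e. `n = 1`). -/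
def baseL : ℝ × ℝ := (H.xs 0, H.h ⟨0, H.hn⟩)

/-- The right base vertex (for a simple histogram, i.e. `n = 1`). -/
def baseR : ℝ × ℝ := (H.xs (Fin.last H.m), H.h ⟨0, H.hn⟩)

/-- The left point `ℓ(v)` (simple-histogram version): if the leftward ray from `v` hits the
left boundary then the left base vertex, otherwise the endpoint of the hit vertical edge
closer to the base edge. -/
def lptS (v : ℝ × ℝ) : ℝ × ℝ :=
  if H.lhit v = H.xs 0 then H.baseL else (H.lhit v, H.nearY (H.lhit v) v.2)

/-- The right point `r(v)` (simple-histogram version). -/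
def rptS (v : ℝ × ℝ) : ℝ × ℝ :=
  if H.rhit v = H.xs (Fin.last H.m) then H.baseR
  else (H.rhit v, H.nearY (H.rhit v) v.2)

/-- The interval `[p, q]`: all vertices of `P` between `p` and `q`. -/
def ivl (p q : ℝ × ℝ) : Set (ℝ × ℝ) :=
  {u | u ∈ H.verts ∧ p.1 ≤ u.1 ∧ u.1 ≤ q.1}

/-- The interval `I(v) = [ℓ(v), r(v)]` of a vertex (double-histogram version). -/
def Iv (v : ℝ × ℝ) : Set (ℝ × ℝ) := H.ivl (H.lpt v) (H.rpt v)

/-- The interval `I(v) = [ℓ(v), r(v)]` of a vertex (simple-histogram version). -/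
def IvS (v : ℝ × ℝ) : Set (ℝ × ℝ) := H.ivl (H.lptS v) (H.rptS v)

/-- The corresponding vertex `cv(v)`: the unique other vertex sharing a horizontal edge
(equivalently, by general position, the `y`-coordinate) with `v`. -/
def cv (v : ℝ × ℝ) : ℝ × ℝ :=
  (sSup {x | (x, v.2) ∈ H.verts ∧ x ≠ v.1}, v.2)

/-- `v` is a left vertex: the left endpoint of its horizontal edge. -/
def IsLeftVert (v : ℝ × ℝ) : Prop :=
  (∃ i : Fin H.m, v = (H.xs i.castSucc, H.d i)) ∨
    ∃ j : Fin H.n, v = (H.ys j.castSucc, H.h j)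

/-- `v` is a right vertex: the right endpoint of its horizontal edge. -/
def IsRightVert (v : ℝ × ℝ) : Prop :=
  (∃ i : Fin H.m, v = (H.xs i.succ, H.d i)) ∨
    ∃ j : Fin H.n, v = (H.ys j.succ, H.h j)

/-- `v` is an `ℓ`-reflex vertex (a left vertex with interior angle `3π/2`). -/
def IsLReflex (v : ℝ × ℝ) : Prop :=
  (∃ i : Fin H.m, ∃ _ : 0 < (i : ℕ),
      v = (H.xs i.castSucc, H.d i) ∧
        H.d ⟨(i : ℕ) - 1, lt_of_le_of_lt (Nat.sub_le _ _) i.isLt⟩ < H.d i) ∨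
    ∃ j : Fin H.n, ∃ _ : 0 < (j : ℕ),
      v = (H.ys j.castSucc, H.h j) ∧
        H.h j < H.h ⟨(j : ℕ) - 1, lt_of_le_of_lt (Nat.sub_le _ _) j.isLt⟩

/-- `v` is an `r`-reflex vertex (a right vertex with interior angle `3π/2`). -/
def IsRReflex (v : ℝ × ℝ) : Prop :=
  (∃ i : Fin H.m, ∃ hi : (i : ℕ) + 1 < H.m,
      v = (H.xs i.succ, H.d i) ∧ H.d ⟨(i : ℕ) + 1, hi⟩ < H.d i) ∨
    ∃ j : Fin H.n, ∃ hj : (j : ℕ) + 1 < H.n,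
      v = (H.ys j.succ, H.h j) ∧ H.h j < H.h ⟨(j : ℕ) + 1, hj⟩

/-- `v` is a reflex vertex. -/
def IsReflex (v : ℝ × ℝ) : Prop := H.IsLReflex v ∨ H.IsRReflex v

/-- The near dominator `nd(s,t)`: for `t` strictly right of `s`, the rightmost vertex of
`N(s)` to the left of `t`, ties broken towards the base line (symmetric otherwise). -/
def nd (s t : ℝ × ℝ) : ℝ × ℝ :=
  if s.1 < t.1 then
    let nx := sSup {x | (∃ y, (x, y) ∈ H.Nbr s) ∧ x ≤ t.1}
    (nx, closestToBase {y | (nx, y) ∈ H.Nbr s})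
  else
    let nx := sInf {x | (∃ y, (x, y) ∈ H.Nbr s) ∧ t.1 ≤ x}
    (nx, closestToBase {y | (nx, y) ∈ H.Nbr s})

/-- The far dominator `fd(s,t)`: for `t` strictly right of `s`, the leftmost vertex of
`N(s)` to the right of `t`, ties broken towards the base line; if there is no such vertex,
the point `r(s)` (symmetric otherwise). -/
def fd (s t : ℝ × ℝ) : ℝ × ℝ :=
  if s.1 < t.1 then
    if ∃ w ∈ H.Nbr s, t.1 ≤ w.1 then
      let nx := sInf {x | (∃ y, (x, y) ∈ H.Nbr s) ∧ t.1 ≤ x}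
      (nx, closestToBase {y | (nx, y) ∈ H.Nbr s})
    else H.rpt s
  else
    if ∃ w ∈ H.Nbr s, w.1 ≤ t.1 then
      let nx := sSup {x | (∃ y, (x, y) ∈ H.Nbr s) ∧ x ≤ t.1}
      (nx, closestToBase {y | (nx, y) ∈ H.Nbr s})
    else H.lpt s

/-- The sequence `a^i(s)`: `a^0(s) = s`, and `a^i(s)` is the leftmost vertex of
`A^i(s) = {v ∈ N(s) : ℓ(v)_x < ℓ(a^{i-1}(s))_x}` (ties towards the base line),
or `a^{i-1}(s)` if `A^i(s)` is empty. -/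
def aSeq (s : ℝ × ℝ) : ℕ → ℝ × ℝ := fun k =>
  Nat.rec (motive := fun _ => ℝ × ℝ) s
    (fun _ prev =>
      let A : Set (ℝ × ℝ) := {v | v ∈ H.Nbr s ∧ (H.lpt v).1 < (H.lpt prev).1}
      if A = ∅ then prev
      else
        let ax := sInf {x | ∃ y, (x, y) ∈ A}
        (ax, closestToBase {y | (ax, y) ∈ A}))
    k

/-- The sequence `b^i(s)`: `b^0(s) = s`, and `b^i(s)` is the rightmost vertex of
`B^i(s) = {v ∈ N(s) : r(v)_x > r(b^{i-1}(s))_x}` (ties towards the base line),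
or `b^{i-1}(s)` if `B^i(s)` is empty. -/
def bSeq (s : ℝ × ℝ) : ℕ → ℝ × ℝ := fun k =>
  Nat.rec (motive := fun _ => ℝ × ℝ) s
    (fun _ prev =>
      let B : Set (ℝ × ℝ) := {v | v ∈ H.Nbr s ∧ (H.rpt prev).1 < (H.rpt v).1}
      if B = ∅ then prev
      else
        let bx := sSup {x | ∃ y, (x, y) ∈ B}
        (bx, closestToBase {y | (bx, y) ∈ B}))
    k

/-- The pair of the `k`-th bottom dominator `bd^k(s)` and `k`-th top dominator `td^k(s)`:
`bd^0(s) = td^0(s) = s`; for `k > 0`, with `I^k(s) = I(bd^{k-1}(s)) ∪ I(td^{k-1}(s))`,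
`bd^k(s)` is the leftmost vertex of `I^k(s)⁻` minimizing the distance to the base line,
and `td^k(s)` the leftmost vertex of `I^k(s)⁺` minimizing the distance to the base line;
if one of the two sets is empty, the corresponding dominator equals the other one. -/
def bdtd (s : ℝ × ℝ) : ℕ → (ℝ × ℝ) × (ℝ × ℝ) := fun k =>
  Nat.rec (motive := fun _ => (ℝ × ℝ) × (ℝ × ℝ)) (s, s)
    (fun _ p =>
      let J : Set (ℝ × ℝ) := H.Iv p.1 ∪ H.Iv p.2
      let Jm : Set (ℝ × ℝ) := {v | v ∈ J ∧ v.2 < 0}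
      let Jp : Set (ℝ × ℝ) := {v | v ∈ J ∧ 0 < v.2}
      if Jm = ∅ then (leftmostLowest Jp, leftmostLowest Jp)
      else if Jp = ∅ then (leftmostLowest Jm, leftmostLowest Jm)
      else (leftmostLowest Jm, leftmostLowest Jp))
    k

/-- The `k`-th interval `I^k(s)`: `I^0(s) = {s}` and
`I^{k+1}(s) = I(bd^k(s)) ∪ I(td^k(s))`. -/
def Ipow (s : ℝ × ℝ) : ℕ → Set (ℝ × ℝ) := fun k =>
  Nat.rec (motive := fun _ => Set (ℝ × ℝ)) {s}
    (fun k _ => H.Iv (H.bdtd s k).1 ∪ H.Iv (H.bdtd s k).2) k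

/-- `w` lies on a shortest path from `s` to `t` in the visibility graph. -/
def OnShortestPath (s t w : ↥H.verts) : Prop :=
  ∃ p : H.visGraph.Walk s t, p.length = H.visGraph.dist s t ∧ w ∈ p.support

end DoubleHistogram

/-- A routing scheme for a graph `G`: every vertex carries a binary label and a binary
routing table, and the routing function maps (link table of the current vertex, routing
table of the current vertex, label of the target, current header) to the next vertex
together with the new header. -/
structure RoutingScheme {V : Type} (G : SimpleGraph V) where
  lab : V → List Bool
  tab : V → List Bool
  route : Set (List Bool) → List Bool → List Bool → List Bool → V × List Bool

namespace RoutingScheme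

variable {V : Type} {G : SimpleGraph V} (R : RoutingScheme G)

/-- One routing step at vertex `p` with header `h`, towards the target `t`: the routing
function is applied to the link table of `p` (the labels of its closed neighborhood),
the routing table of `p`, the label of `t` and the header `h`. -/
def step (t p : V) (h : List Bool) : V × List Bool :=
  R.route (R.lab '' {w | w = p ∨ G.Adj p w}) (R.tab p) (R.lab t) h

/-- The routing sequence from `s` towards `t`, starting with the empty header. -/
def seq (s t : V) : ℕ → V × List Bool := fun k =>
  Nat.rec (motive := fun _ => V × List Bool) (s, ([] : List Bool))
    (fun _ q => R.step t q.1 q.2) k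

end RoutingScheme

namespace DoubleHistogram

variable (H : DoubleHistogram)

lemma verts_finite : H.verts.Finite := by
  unfold verts
  apply Set.Finite.union <;>
  · apply Set.finite_iUnion
    intro i
    exact (Set.finite_singleton _).insert _

lemma verts_subset_region : H.verts ⊆ H.region := by
  intro v hv
  unfold verts at hv
  unfold region
  rcases hv with hv | hv
  · left
    rw [Set.mem_iUnion] at hv ⊢
    obtain ⟨i, hi⟩ := hv
    refine ⟨i, ?_⟩
    have hle : H.xs i.castSucc ≤ H.xs i.succ :=
      (H.xs_mono (Fin.castSucc_lt_succ : i.castSucc < i.succ)).le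
    rcases hi with hi | hi <;> subst hi
    · exact Set.mk_mem_prod ⟨le_rfl, hle⟩ ⟨le_rfl, (H.d_neg i).le⟩
    · exact Set.mk_mem_prod ⟨hle, le_rfl⟩ ⟨le_rfl, (H.d_neg i).le⟩
  · right
    rw [Set.mem_iUnion] at hv ⊢
    obtain ⟨j, hj⟩ := hv
    refine ⟨j, ?_⟩
    have hle : H.ys j.castSucc ≤ H.ys j.succ :=
      (H.ys_mono (Fin.castSucc_lt_succ : j.castSucc < j.succ)).le
    rcases hj with hj | hj <;> subst hj
    · exact Set.mk_mem_prod ⟨le_rfl, hle⟩ ⟨(H.h_pos j).le, le_rfl⟩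
    · exact Set.mk_mem_prod ⟨hle, le_rfl⟩ ⟨(H.h_pos j).le, le_rfl⟩

/-- Every vertex is either a bottom vertex (negative `y`, abscissa an `xs` value) or a
top vertex (positive `y`, abscissa a `ys` value). -/
lemma vert_cases {v : ℝ × ℝ} (hv : v ∈ H.verts) :
    (v.2 < 0 ∧ ∃ a : Fin (H.m + 1), v.1 = H.xs a) ∨
      (0 < v.2 ∧ ∃ b : Fin (H.n + 1), v.1 = H.ys b) := by
  unfold verts at hv
  rcases hv with hv | hv
  · left
    rw [Set.mem_iUnion] at hv
    obtain ⟨i, hi⟩ := hv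
    rcases hi with hi | hi <;> subst hi
    · exact ⟨H.d_neg i, ⟨i.castSucc, rfl⟩⟩
    · exact ⟨H.d_neg i, ⟨i.succ, rfl⟩⟩
  · right
    rw [Set.mem_iUnion] at hv
    obtain ⟨j, hj⟩ := hv
    rcases hj with hj | hj <;> subst hj
    · exact ⟨H.h_pos j, ⟨j.castSucc, rfl⟩⟩
    · exact ⟨H.h_pos j, ⟨j.succ, rfl⟩⟩

lemma vert_x_bounds {v : ℝ × ℝ} (hv : v ∈ H.verts) :
    H.xs 0 ≤ v.1 ∧ v.1 ≤ H.xs (Fin.last H.m) := by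
  rcases H.vert_cases hv with ⟨_, a, ha⟩ | ⟨_, b, hb⟩
  · rw [ha]
    exact ⟨H.xs_mono.monotone (Fin.zero_le a), H.xs_mono.monotone (Fin.le_last a)⟩
  · rw [hb, ← H.left_eq, ← H.right_eq]
    exact ⟨H.ys_mono.monotone (Fin.zero_le b), H.ys_mono.monotone (Fin.le_last b)⟩

lemma region_x_bounds {z : ℝ × ℝ} (hz : z ∈ H.region) :
    H.xs 0 ≤ z.1 ∧ z.1 ≤ H.xs (Fin.last H.m) := by
  unfold region at hz
  rcases hz with hz | hz
  · rw [Set.mem_iUnion] at hz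
    obtain ⟨i, hi, _⟩ := hz
    exact ⟨le_trans (H.xs_mono.monotone (Fin.zero_le _)) hi.1,
      le_trans hi.2 (H.xs_mono.monotone (Fin.le_last _))⟩
  · rw [Set.mem_iUnion] at hz
    obtain ⟨j, hj, _⟩ := hz
    rw [← H.left_eq, ← H.right_eq]
    exact ⟨le_trans (H.ys_mono.monotone (Fin.zero_le _)) hj.1,
      le_trans hj.2 (H.ys_mono.monotone (Fin.le_last _))⟩

end DoubleHistogram
namespace DoubleHistogram

variable (H : DoubleHistogram)

lemma covisible_self {v : ℝ × ℝ} (hv : v ∈ H.region) : H.covisible v v := by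
  intro z hz
  rw [Set.mem_prod, min_self, min_self, max_self, max_self, Set.Icc_self, Set.Icc_self] at hz
  have : z = v := Prod.ext hz.1 hz.2
  rwa [this]

lemma lhit_le {v w : ℝ × ℝ} (h : H.covisible v w) : H.lhit v ≤ min v.1 w.1 := by
  apply csInf_le
  · refine ⟨H.xs 0, fun x hx => ?_⟩
    have : (x, v.2) ∈ H.region := hx.2 (Set.mk_mem_prod ⟨le_rfl, hx.1⟩ rfl)
    exact (H.region_x_bounds this).1
  · refine ⟨min_le_left _ _, ?_⟩
    rintro ⟨x, y⟩ ⟨hx, hy⟩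
    rw [Set.mem_singleton_iff] at hy
    subst hy
    apply h
    exact Set.mk_mem_prod ⟨hx.1, le_trans hx.2 (le_max_left _ _)⟩
      ⟨min_le_left _ _, le_max_left _ _⟩

lemma rhit_ge {v w : ℝ × ℝ} (h : H.covisible v w) : max v.1 w.1 ≤ H.rhit v := by
  apply le_csSup
  · refine ⟨H.xs (Fin.last H.m), fun x hx => ?_⟩
    have : (x, v.2) ∈ H.region := hx.2 (Set.mk_mem_prod ⟨hx.1, le_rfl⟩ rfl)
    exact (H.region_x_bounds this).2
  · refine ⟨le_max_left _ _, ?_⟩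
    rintro ⟨x, y⟩ ⟨hx, hy⟩
    rw [Set.mem_singleton_iff] at hy
    subst hy
    apply h
    exact Set.mk_mem_prod ⟨le_trans (min_le_left _ _) hx.1, hx.2⟩
      ⟨min_le_left _ _, le_max_left _ _⟩

lemma lpt_fst (v : ℝ × ℝ) : (H.lpt v).1 = H.lhit v := by
  unfold lpt; split_ifs with h
  · exact h.symm
  · rfl

lemma rpt_fst (v : ℝ × ℝ) : (H.rpt v).1 = H.rhit v := by
  unfold rpt; split_ifs with h
  · exact h.symm
  · rfl

lemma mem_Iv {u v : ℝ × ℝ} :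
    u ∈ H.Iv v ↔ u ∈ H.verts ∧ H.lhit v ≤ u.1 ∧ u.1 ≤ H.rhit v := by
  unfold Iv ivl
  rw [H.lpt_fst, H.rpt_fst]
  rfl

lemma Iv_subset_verts (v : ℝ × ℝ) : H.Iv v ⊆ H.verts := fun _ hu => (H.mem_Iv.mp hu).1

end DoubleHistogram
/-- For a finite nonempty set of points whose ordinates all have the same sign,
`leftmostLowest` picks an element of the set minimizing the distance to the base line. -/
lemma leftmostLowest_spec {S : Set (ℝ × ℝ)} (hfin : S.Finite) (hne : S.Nonempty)
    (hsign : (∀ q ∈ S, q.2 < 0) ∨ (∀ q ∈ S, 0 < q.2)) :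
    leftmostLowest S ∈ S ∧ ∀ q ∈ S, |(leftmostLowest S).2| ≤ |q.2| := by
  have hinj : ∀ a ∈ S, ∀ b ∈ S, |a.2| = |b.2| → a.2 = b.2 := by
    rcases hsign with h | h
    · intro a ha b hb hab
      rw [abs_of_neg (h a ha), abs_of_neg (h b hb)] at hab
      linarith
    · intro a ha b hb hab
      rw [abs_of_pos (h a ha), abs_of_pos (h b hb)] at hab
      exact hab
  obtain ⟨q₀, hq₀S, hq₀min⟩ := Set.exists_min_image S (fun q => |q.2|) hfin hne
  set X : Set ℝ := {x | ∃ y, (x, y) ∈ S ∧ ∀ q ∈ S, |y| ≤ |q.2|} with hXdef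
  have hX : X = {x | (x, q₀.2) ∈ S} := by
    ext x
    constructor
    · rintro ⟨y, hyS, hymin⟩
      have h1 : |y| = |q₀.2| := le_antisymm (hymin q₀ hq₀S) (hq₀min (x, y) hyS)
      have h2 : y = q₀.2 := hinj (x, y) hyS q₀ hq₀S h1
      rwa [← h2]
    · intro hx
      exact ⟨q₀.2, hx, fun q hq => hq₀min q hq⟩
  have hXfin : X.Finite := by
    apply (hfin.image Prod.fst).subset
    rw [hX]
    exact fun x hx => ⟨(x, q₀.2), hx, rfl⟩
  have hXne : X.Nonempty := by
    rw [hX]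
    exact ⟨q₀.1, by simpa using hq₀S⟩
  have hnxmem : sInf X ∈ X := hXne.csInf_mem hXfin
  obtain ⟨y, hyS, hymin⟩ := hnxmem
  have hy : y = q₀.2 :=
    hinj (sInf X, y) hyS q₀ hq₀S (le_antisymm (hymin q₀ hq₀S) (hq₀min (sInf X, y) hyS))
  have hnxS : (sInf X, q₀.2) ∈ S := by rw [← hy]; exact hyS
  have hY : {y | y ∈ {y | (sInf X, y) ∈ S} ∧ ∀ y' ∈ {y | (sInf X, y) ∈ S}, |y| ≤ |y'|}
      = {q₀.2} := by
    ext y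
    constructor
    · rintro ⟨hyA, hymin⟩
      have h1 : |y| = |q₀.2| := le_antisymm (hymin q₀.2 hnxS) (hq₀min (sInf X, y) hyA)
      exact hinj (sInf X, y) hyA q₀ hq₀S h1
    · rintro rfl
      exact ⟨hnxS, fun y' hy' => hq₀min (sInf X, y') hy'⟩
  have hres : leftmostLowest S = (sInf X, q₀.2) := by
    unfold leftmostLowest closestToBase
    rw [← hXdef, hY, csSup_singleton]
  rw [hres]
  exact ⟨hnxS, fun q hq => hq₀min q hq⟩

/-- A point between the first and last breakpoint of a monotone sequence lies in some
column. -/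
lemma exists_col {m : ℕ} (hm : 0 < m) (f : Fin (m + 1) → ℝ) (_hf : Monotone f) {x : ℝ}
    (h0 : f 0 ≤ x) (h1 : x ≤ f (Fin.last m)) :
    ∃ i : Fin m, f i.castSucc ≤ x ∧ x ≤ f i.succ := by
  by_contra hc
  push_neg at hc
  have key : ∀ k, (h : k ≤ m) → f ⟨k, Nat.lt_succ_of_le h⟩ ≤ x := by
    intro k
    induction k with
    | zero => intro _; exact h0
    | succ k ih =>
      intro h
      have hk : k < m := Nat.lt_of_succ_le h
      have h2 := hc ⟨k, hk⟩ (ih (Nat.le_of_lt hk))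
      exact le_of_lt h2
  have hlast : f ⟨m - 1, Nat.lt_succ_of_le (Nat.sub_le m 1)⟩ ≤ x := key (m - 1) (Nat.sub_le m 1)
  have h2 := hc ⟨m - 1, Nat.sub_lt hm Nat.one_pos⟩ hlast
  have : (⟨m - 1, Nat.sub_lt hm Nat.one_pos⟩ : Fin m).succ = Fin.last m := by
    ext
    simp [Nat.sub_add_cancel (Nat.one_le_of_lt (Nat.lt_of_lt_of_le Nat.zero_lt_one hm))]
  rw [this] at h2
  exact absurd h1 (not_le.mpr h2)
namespace DoubleHistogram

variable (H : DoubleHistogram)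

/-- The key geometric step: the lowest vertex below the base line and the lowest vertex
above the base line in `I(p₁) ∪ I(p₂)` are co-visible, provided `p₁` and `p₂` are
co-visible vertices. -/
lemma key_covisible {p₁ p₂ bd td : ℝ × ℝ}
    (hco : H.covisible p₁ p₂)
    (hbdJ : bd ∈ H.Iv p₁ ∪ H.Iv p₂) (hbdneg : bd.2 < 0)
    (hbdmin : ∀ q ∈ H.Iv p₁ ∪ H.Iv p₂, q.2 < 0 → |bd.2| ≤ |q.2|)
    (htdJ : td ∈ H.Iv p₁ ∪ H.Iv p₂) (htdpos : 0 < td.2)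
    (htdmin : ∀ q ∈ H.Iv p₁ ∪ H.Iv p₂, 0 < q.2 → |td.2| ≤ |q.2|) :
    H.covisible bd td := by
  have hbdv : bd ∈ H.verts := by
    rcases hbdJ with h | h <;> exact H.Iv_subset_verts _ h
  have htdv : td ∈ H.verts := by
    rcases htdJ with h | h <;> exact H.Iv_subset_verts _ h
  obtain ⟨a, ha⟩ : ∃ a : Fin (H.m + 1), bd.1 = H.xs a := by
    rcases H.vert_cases hbdv with ⟨_, h⟩ | ⟨h, _⟩
    · exact h
    · exact absurd hbdneg (not_lt.mpr h.le)
  obtain ⟨b, hb⟩ : ∃ b : Fin (H.n + 1), td.1 = H.ys b := by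
    rcases H.vert_cases htdv with ⟨h, _⟩ | ⟨_, h⟩
    · exact absurd htdpos (not_lt.mpr h.le)
    · exact h
  -- the union of the two x-ranges
  set U : ℝ → Prop :=
    fun x => (H.lhit p₁ ≤ x ∧ x ≤ H.rhit p₁) ∨ (H.lhit p₂ ≤ x ∧ x ≤ H.rhit p₂) with hUdef
  have hI1c : H.lhit p₁ ≤ p₁.1 ∧ p₁.1 ≤ H.rhit p₁ :=
    ⟨le_trans (H.lhit_le hco) (min_le_left _ _), le_trans (le_max_left _ _) (H.rhit_ge hco)⟩
  have hI2c : H.lhit p₂ ≤ p₁.1 ∧ p₁.1 ≤ H.rhit p₂ :=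
    ⟨le_trans (H.lhit_le (H.covisible_symm hco)) (min_le_right _ _),
      le_trans (le_max_right _ _) (H.rhit_ge (H.covisible_symm hco))⟩
  have hmemU : ∀ u : ℝ × ℝ, u ∈ H.Iv p₁ ∪ H.Iv p₂ → U u.1 := by
    intro u hu
    rcases hu with hu | hu
    · exact Or.inl (H.mem_Iv.mp hu).2
    · exact Or.inr (H.mem_Iv.mp hu).2
  have hUmem : ∀ u : ℝ × ℝ, u ∈ H.verts → U u.1 → u ∈ H.Iv p₁ ∪ H.Iv p₂ := by
    intro u huv hu
    rcases hu with hu | hu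
    · exact Or.inl (H.mem_Iv.mpr ⟨huv, hu⟩)
    · exact Or.inr (H.mem_Iv.mpr ⟨huv, hu⟩)
  have hbdU : U bd.1 := hmemU bd hbdJ
  have htdU : U td.1 := hmemU td htdJ
  -- points between bd and td are in U
  have hUbetween : ∀ x : ℝ, min bd.1 td.1 ≤ x → x ≤ max bd.1 td.1 → U x := by
    intro x h1 h2
    rcases le_total x p₁.1 with hxc | hcx
    · rcases min_cases bd.1 td.1 with ⟨hm, _⟩ | ⟨hm, _⟩
      · rw [hm] at h1
        rcases hbdU with ⟨hl, _⟩ | ⟨hl, _⟩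
        · exact Or.inl ⟨le_trans hl h1, le_trans hxc hI1c.2⟩
        · exact Or.inr ⟨le_trans hl h1, le_trans hxc hI2c.2⟩
      · rw [hm] at h1
        rcases htdU with ⟨hl, _⟩ | ⟨hl, _⟩
        · exact Or.inl ⟨le_trans hl h1, le_trans hxc hI1c.2⟩
        · exact Or.inr ⟨le_trans hl h1, le_trans hxc hI2c.2⟩
    · rcases max_cases bd.1 td.1 with ⟨hm, _⟩ | ⟨hm, _⟩
      · rw [hm] at h2
        rcases hbdU with ⟨_, hr⟩ | ⟨_, hr⟩
        · exact Or.inl ⟨le_trans hI1c.1 hcx, le_trans h2 hr⟩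
        · exact Or.inr ⟨le_trans hI2c.1 hcx, le_trans h2 hr⟩
      · rw [hm] at h2
        rcases htdU with ⟨_, hr⟩ | ⟨_, hr⟩
        · exact Or.inl ⟨le_trans hI1c.1 hcx, le_trans h2 hr⟩
        · exact Or.inr ⟨le_trans hI2c.1 hcx, le_trans h2 hr⟩
  -- now prove the rectangle is in the region
  rintro ⟨x, y⟩ hz
  rw [Set.mem_prod] at hz
  obtain ⟨hzx, hzy⟩ := hz
  have hbtd : bd.2 < td.2 := lt_trans hbdneg htdpos
  have hy1 : bd.2 ≤ y := by
    have := hzy.1; rwa [min_eq_left hbtd.le] at this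
  have hy2 : y ≤ td.2 := by
    have := hzy.2; rwa [max_eq_right hbtd.le] at this
  have hx0 : H.xs 0 ≤ x :=
    le_trans (le_min (H.vert_x_bounds hbdv).1 (H.vert_x_bounds htdv).1) hzx.1
  have hx1 : x ≤ H.xs (Fin.last H.m) :=
    le_trans hzx.2 (max_le (H.vert_x_bounds hbdv).2 (H.vert_x_bounds htdv).2)
  rcases le_total y 0 with hy | hy
  · -- below the base line: use a bottom column
    obtain ⟨i, hi1, hi2⟩ := exists_col H.hm H.xs H.xs_mono.monotone hx0 hx1
    have hend : ∃ e, (e = H.xs i.castSucc ∨ e = H.xs i.succ) ∧ U e := by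
      by_cases hA : min bd.1 td.1 ≤ H.xs i.castSucc
      · exact ⟨H.xs i.castSucc, Or.inl rfl, hUbetween _ hA (le_trans hi1 hzx.2)⟩
      · push_neg at hA
        by_cases hB : H.xs i.succ ≤ max bd.1 td.1
        · exact ⟨H.xs i.succ, Or.inr rfl, hUbetween _ (le_trans hzx.1 hi2) hB⟩
        · push_neg at hB
          exfalso
          have h1 : H.xs i.castSucc < H.xs a := by
            rw [← ha]; exact lt_of_lt_of_le hA (min_le_left _ _)
          have h2 : H.xs a < H.xs i.succ := by
            rw [← ha]; exact lt_of_le_of_lt (le_max_left _ _) hB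
          have h1' := H.xs_mono.lt_iff_lt.mp h1
          have h2' := H.xs_mono.lt_iff_lt.mp h2
          rw [Fin.lt_def] at h1' h2'
          simp only [Fin.coe_castSucc, Fin.val_succ] at h1' h2'
          omega
    obtain ⟨e, he, hUe⟩ := hend
    have hv : (e, H.d i) ∈ H.verts := by
      left
      rw [Set.mem_iUnion]
      refine ⟨i, ?_⟩
      rcases he with he | he <;> rw [he]
      · exact Set.mem_insert _ _
      · exact Set.mem_insert_of_mem _ rfl
    have hvJ : (e, H.d i) ∈ H.Iv p₁ ∪ H.Iv p₂ := hUmem _ hv hUe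
    have hmin := hbdmin _ hvJ (H.d_neg i)
    rw [abs_of_neg hbdneg, abs_of_neg (H.d_neg i)] at hmin
    have hdi : H.d i ≤ bd.2 := by linarith
    left
    rw [Set.mem_iUnion]
    exact ⟨i, Set.mk_mem_prod ⟨hi1, hi2⟩ ⟨le_trans hdi hy1, hy⟩⟩
  · -- above the base line: use a top column
    have hx0' : H.ys 0 ≤ x := by rw [H.left_eq]; exact hx0
    have hx1' : x ≤ H.ys (Fin.last H.n) := by rw [H.right_eq]; exact hx1
    obtain ⟨j, hj1, hj2⟩ := exists_col H.hn H.ys H.ys_mono.monotone hx0' hx1'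
    have hend : ∃ e, (e = H.ys j.castSucc ∨ e = H.ys j.succ) ∧ U e := by
      by_cases hA : min bd.1 td.1 ≤ H.ys j.castSucc
      · exact ⟨H.ys j.castSucc, Or.inl rfl, hUbetween _ hA (le_trans hj1 hzx.2)⟩
      · push_neg at hA
        by_cases hB : H.ys j.succ ≤ max bd.1 td.1
        · exact ⟨H.ys j.succ, Or.inr rfl, hUbetween _ (le_trans hzx.1 hj2) hB⟩
        · push_neg at hB
          exfalso
          have h1 : H.ys j.castSucc < H.ys b := by
            rw [← hb]; exact lt_of_lt_of_le hA (min_le_right _ _)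
          have h2 : H.ys b < H.ys j.succ := by
            rw [← hb]; exact lt_of_le_of_lt (le_max_right _ _) hB
          have h1' := H.ys_mono.lt_iff_lt.mp h1
          have h2' := H.ys_mono.lt_iff_lt.mp h2
          rw [Fin.lt_def] at h1' h2'
          simp only [Fin.coe_castSucc, Fin.val_succ] at h1' h2'
          omega
    obtain ⟨e, he, hUe⟩ := hend
    have hv : (e, H.h j) ∈ H.verts := by
      right
      rw [Set.mem_iUnion]
      refine ⟨j, ?_⟩
      rcases he with he | he <;> rw [he]
      · exact Set.mem_insert _ _
      · exact Set.mem_insert_of_mem _ rfl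
    have hvJ : (e, H.h j) ∈ H.Iv p₁ ∪ H.Iv p₂ := hUmem _ hv hUe
    have hmin := htdmin _ hvJ (H.h_pos j)
    rw [abs_of_pos htdpos, abs_of_pos (H.h_pos j)] at hmin
    right
    rw [Set.mem_iUnion]
    exact ⟨j, Set.mk_mem_prod ⟨hj1, hj2⟩ ⟨hy, le_trans hy2 hmin⟩⟩

end DoubleHistogram
/-- In a double histogram, for any vertex `s` and any `k ≥ 0`, the
dominators `bd^k(s)` and `td^k(s)` are co-visible. -/
theorem dominators_see_each_other
    (H : DoubleHistogram) (s : ↥H.verts) (k : ℕ) :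
    H.covisible (H.bdtd (s : ℝ × ℝ) k).1 (H.bdtd (s : ℝ × ℝ) k).2 := by
  suffices h : ∀ k, (H.bdtd (s : ℝ × ℝ) k).1 ∈ H.verts ∧ (H.bdtd (s : ℝ × ℝ) k).2 ∈ H.verts ∧
      H.covisible (H.bdtd (s : ℝ × ℝ) k).1 (H.bdtd (s : ℝ × ℝ) k).2 by
    exact (h k).2.2
  intro k
  induction k with
  | zero =>
    exact ⟨s.2, s.2, H.covisible_self (H.verts_subset_region s.2)⟩
  | succ k ih =>
    obtain ⟨h1, h2, hco⟩ := ih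
    have hred : H.bdtd (s : ℝ × ℝ) (k + 1) =
        (let J : Set (ℝ × ℝ) := H.Iv (H.bdtd (s : ℝ × ℝ) k).1 ∪ H.Iv (H.bdtd (s : ℝ × ℝ) k).2
         let Jm : Set (ℝ × ℝ) := {v | v ∈ J ∧ v.2 < 0}
         let Jp : Set (ℝ × ℝ) := {v | v ∈ J ∧ 0 < v.2}
         if Jm = ∅ then (leftmostLowest Jp, leftmostLowest Jp)
         else if Jp = ∅ then (leftmostLowest Jm, leftmostLowest Jm)
         else (leftmostLowest Jm, leftmostLowest Jp)) := rfl
    set J : Set (ℝ × ℝ) :=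
      H.Iv (H.bdtd (s : ℝ × ℝ) k).1 ∪ H.Iv (H.bdtd (s : ℝ × ℝ) k).2 with hJdef
    set Jm : Set (ℝ × ℝ) := {v | v ∈ J ∧ v.2 < 0} with hJmdef
    set Jp : Set (ℝ × ℝ) := {v | v ∈ J ∧ 0 < v.2} with hJpdef
    have hJv : J ⊆ H.verts := by
      rintro u (hu | hu) <;> exact H.Iv_subset_verts _ hu
    have hJfin : J.Finite := H.verts_finite.subset hJv
    have hp1J : (H.bdtd (s : ℝ × ℝ) k).1 ∈ J := by
      left
      refine H.mem_Iv.mpr ⟨h1, ?_, ?_⟩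
      · exact le_trans (H.lhit_le hco) (min_le_left _ _)
      · exact le_trans (le_max_left _ _) (H.rhit_ge hco)
    have hp1mem : (H.bdtd (s : ℝ × ℝ) k).1 ∈ Jm ∪ Jp := by
      rcases H.vert_cases h1 with ⟨hneg, _⟩ | ⟨hpos, _⟩
      · exact Or.inl ⟨hp1J, hneg⟩
      · exact Or.inr ⟨hp1J, hpos⟩
    rw [hred]
    simp only
    split_ifs with hm0 hp0
    · -- Jm is empty
      have hJpne : Jp.Nonempty := by
        rcases hp1mem with h | h
        · have h' : (H.bdtd (s : ℝ × ℝ) k).1 ∈ ({v | v ∈ J ∧ v.2 < 0} : Set (ℝ × ℝ)) := h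
          rw [hm0] at h'
          exact absurd h' (Set.notMem_empty _)
        · exact ⟨_, h⟩
      obtain ⟨hmem, _⟩ := leftmostLowest_spec (hJfin.subset fun v hv => hv.1) hJpne
        (Or.inr fun q hq => hq.2)
      have hv : leftmostLowest Jp ∈ H.verts := hJv hmem.1
      exact ⟨hv, hv, H.covisible_self (H.verts_subset_region hv)⟩
    · -- Jp is empty
      have hJmne : Jm.Nonempty := Set.nonempty_iff_ne_empty.mpr hm0
      obtain ⟨hmem, _⟩ := leftmostLowest_spec (hJfin.subset fun v hv => hv.1) hJmne
        (Or.inl fun q hq => hq.2)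
      have hv : leftmostLowest Jm ∈ H.verts := hJv hmem.1
      exact ⟨hv, hv, H.covisible_self (H.verts_subset_region hv)⟩
    · -- both nonempty
      have hJmne : Jm.Nonempty := Set.nonempty_iff_ne_empty.mpr hm0
      have hJpne : Jp.Nonempty := Set.nonempty_iff_ne_empty.mpr hp0
      obtain ⟨hmemm, hminm⟩ := leftmostLowest_spec (hJfin.subset fun v hv => hv.1) hJmne
        (Or.inl fun q hq => hq.2)
      obtain ⟨hmemp, hminp⟩ := leftmostLowest_spec (hJfin.subset fun v hv => hv.1) hJpne
        (Or.inr fun q hq => hq.2)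
      refine ⟨hJv hmemm.1, hJv hmemp.1, ?_⟩
      exact H.key_covisible hco hmemm.1 hmemm.2
        (fun q hq hqneg => hminm q ⟨hq, hqneg⟩) hmemp.1 hmemp.2
        (fun q hq hqpos => hminp q ⟨hq, hqpos⟩)
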